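/- In the additive Gaussian channel y = ρx + w, for all h ∈ ℝ^n the second derivative of log ℓ satisfies ∇²_{h,h} log ℓ(y) = ρ² ( E[⟨x,h⟩² | y] − (E[⟨x,h⟩ | y])² ), i.e. it equals ρ² times the posterior variance of ⟨x,h⟩ given y. -/

import Mathlib

set_option synthInstance.maxHeartbeats 1000000
set_option maxHeartbeats 1000000

open MeasureTheory Real
open scoped RealInnerProductSpace ENNReal


noncomputable def stdGaussian (n : ℕ) : Measure (EuclideanSpace ℝ (Fin n)) :=
  volume.withDensity
    (fun w => ENNReal.ofReal ((2 * π) ^ (-(n : ℝ) / 2) * Real.exp (-‖w‖ ^ 2 / 2)))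

noncomputable def lik (n : ℕ) (ρ : ℝ) (μX : Measure (EuclideanSpace ℝ (Fin n)))
    (u : EuclideanSpace ℝ (Fin n)) : ℝ :=
  ∫ x, Real.exp (ρ * ⟪u, x⟫ - ρ ^ 2 / 2 * ‖x‖ ^ 2) ∂μX

noncomputable def postExp (n : ℕ) (ρ : ℝ) (μX : Measure (EuclideanSpace ℝ (Fin n)))
    (F : EuclideanSpace ℝ (Fin n) → ℝ) (u : EuclideanSpace ℝ (Fin n)) : ℝ :=
  (lik n ρ μX u)⁻¹ * ∫ x, Real.exp (ρ * ⟪u, x⟫ - ρ ^ 2 / 2 * ‖x‖ ^ 2) * F x ∂μX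

noncomputable def postMean (n : ℕ) (ρ : ℝ) (μX : Measure (EuclideanSpace ℝ (Fin n)))
    (u : EuclideanSpace ℝ (Fin n)) : EuclideanSpace ℝ (Fin n) :=
  (lik n ρ μX u)⁻¹ • ∫ x, Real.exp (ρ * ⟪u, x⟫ - ρ ^ 2 / 2 * ‖x‖ ^ 2) • x ∂μX

namespace SecondDerivAux

variable {n : ℕ}

noncomputable def ee (ρ : ℝ) (v x : EuclideanSpace ℝ (Fin n)) : ℝ :=
  Real.exp (ρ * ⟪v, x⟫ - ρ ^ 2 / 2 * ‖x‖ ^ 2)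

lemma poly_bound {ρ : ℝ} (hρ : 0 < ρ) (k : ℕ) {t : ℝ} (ht : 0 ≤ t) :
    t ^ k * Real.exp (ρ * t - ρ ^ 2 / 2 * t ^ 2) ≤ k.factorial / ρ ^ k * Real.exp 2 := by
  have hk : (0:ℝ) < k.factorial := by exact_mod_cast k.factorial_pos
  have hfac : (ρ * t) ^ k ≤ k.factorial * Real.exp (ρ * t) := by
    have h1 := Real.pow_div_factorial_le_exp (x := ρ * t) (by positivity) k
    calc (ρ*t)^k = (ρ*t)^k / k.factorial * k.factorial := by field_simp
      _ ≤ Real.exp (ρ*t) * k.factorial := by gcongr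
      _ = k.factorial * Real.exp (ρ*t) := mul_comm _ _
  have htk : t ^ k = (ρ*t)^k / ρ ^ k := by rw [mul_pow]; field_simp
  have hexp2 : Real.exp (ρ * t) * Real.exp (ρ * t - ρ^2/2 * t^2) ≤ Real.exp 2 := by
    rw [← Real.exp_add]
    apply Real.exp_le_exp.2
    nlinarith [sq_nonneg (ρ * t - 2)]
  calc t ^ k * Real.exp (ρ*t - ρ^2/2*t^2)
      = (ρ*t)^k / ρ^k * Real.exp (ρ*t - ρ^2/2*t^2) := by rw [htk]
    _ ≤ (k.factorial * Real.exp (ρ*t)) / ρ^k * Real.exp (ρ*t - ρ^2/2*t^2) := by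
        gcongr
    _ = k.factorial / ρ^k * (Real.exp (ρ*t) * Real.exp (ρ*t - ρ^2/2*t^2)) := by ring
    _ ≤ k.factorial / ρ^k * Real.exp 2 := by
        have : 0 ≤ (k.factorial : ℝ) / ρ^k := by positivity
        exact mul_le_mul_of_nonneg_left hexp2 this

lemma ee_bound {ρ : ℝ} (hρ : 0 < ρ) (u : EuclideanSpace ℝ (Fin n)) (k : ℕ)
    (x : EuclideanSpace ℝ (Fin n)) {v : EuclideanSpace ℝ (Fin n)}
    (hv : v ∈ Metric.ball u 1) :
    ‖x‖ ^ k * ee ρ v x ≤ k.factorial / ρ ^ k * Real.exp 2 * Real.exp (ρ * ⟪x, u⟫) := by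
  have hvu : ‖v - u‖ ≤ 1 := by
    rw [Metric.mem_ball, dist_eq_norm] at hv; exact hv.le
  have hcs : ⟪v - u, x⟫ ≤ ‖x‖ := by
    calc ⟪v - u, x⟫ ≤ ‖v - u‖ * ‖x‖ := real_inner_le_norm _ _
      _ ≤ 1 * ‖x‖ := by gcongr
      _ = ‖x‖ := one_mul _
  have hsplit : ⟪v, x⟫ = ⟪u, x⟫ + ⟪v - u, x⟫ := by
    rw [inner_sub_left]; ring
  have h1 : ρ * ⟪v, x⟫ - ρ^2/2 * ‖x‖^2
      ≤ ρ * ⟪u, x⟫ + (ρ * ‖x‖ - ρ^2/2 * ‖x‖^2) := by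
    rw [hsplit]
    have := mul_le_mul_of_nonneg_left hcs hρ.le
    nlinarith
  have h2 : ee ρ v x ≤ Real.exp (ρ * ⟪u, x⟫) * Real.exp (ρ * ‖x‖ - ρ^2/2 * ‖x‖^2) := by
    rw [← Real.exp_add]; exact Real.exp_le_exp.2 h1
  have h3 : ‖x‖ ^ k * ee ρ v x
      ≤ Real.exp (ρ * ⟪u, x⟫) * (‖x‖ ^ k * Real.exp (ρ * ‖x‖ - ρ^2/2 * ‖x‖^2)) := by
    have hx : (0:ℝ) ≤ ‖x‖ ^ k := by positivity
    calc ‖x‖ ^ k * ee ρ v x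
        ≤ ‖x‖ ^ k * (Real.exp (ρ * ⟪u, x⟫) * Real.exp (ρ * ‖x‖ - ρ^2/2 * ‖x‖^2)) :=
          mul_le_mul_of_nonneg_left h2 hx
      _ = Real.exp (ρ * ⟪u, x⟫) * (‖x‖ ^ k * Real.exp (ρ * ‖x‖ - ρ^2/2 * ‖x‖^2)) := by ring
  calc ‖x‖ ^ k * ee ρ v x
      ≤ Real.exp (ρ * ⟪u, x⟫) * (‖x‖ ^ k * Real.exp (ρ * ‖x‖ - ρ^2/2 * ‖x‖^2)) := h3
    _ ≤ Real.exp (ρ * ⟪u, x⟫) * (k.factorial / ρ ^ k * Real.exp 2) :=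
        mul_le_mul_of_nonneg_left (poly_bound hρ k (norm_nonneg x)) (Real.exp_pos _).le
    _ = k.factorial / ρ ^ k * Real.exp 2 * Real.exp (ρ * ⟪x, u⟫) := by
        rw [real_inner_comm x u]; ring


lemma continuous_ee (ρ : ℝ) (v : EuclideanSpace ℝ (Fin n)) :
    Continuous (fun x => ee ρ v x : EuclideanSpace ℝ (Fin n) → ℝ) := by
  apply Real.continuous_exp.comp
  exact (continuous_const.mul (continuous_const.inner continuous_id)).sub
    (continuous_const.mul ((continuous_norm).pow 2))

lemma integrable_pow_ee {ρ : ℝ} (hρ : 0 < ρ)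
    {μX : Measure (EuclideanSpace ℝ (Fin n))}
    (hexp : ∀ (α : ℝ) (h : EuclideanSpace ℝ (Fin n)),
      Integrable (fun x => Real.exp (α * ⟪x, h⟫)) μX)
    (u : EuclideanSpace ℝ (Fin n)) (k : ℕ) :
    Integrable (fun x => ‖x‖ ^ k * ee ρ u x) μX := by
  refine Integrable.mono' (((hexp ρ u).const_mul (k.factorial / ρ ^ k * Real.exp 2))) ?_ ?_
  · exact ((continuous_norm.pow k).mul (continuous_ee ρ u)).aestronglyMeasurable
  · filter_upwards with x
    have hnn : (0:ℝ) ≤ ‖x‖ ^ k * ee ρ u x :=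
      mul_nonneg (by positivity) (le_of_lt (by unfold ee; exact Real.exp_pos _))
    rw [Real.norm_eq_abs, abs_of_nonneg hnn]
    exact ee_bound hρ u k x (Metric.mem_ball_self one_pos)

lemma hasFDerivAt_ee (ρ : ℝ) (x v : EuclideanSpace ℝ (Fin n)) :
    HasFDerivAt (fun v => ee ρ v x) ((ρ * ee ρ v x) • innerSL ℝ x) v := by
  have h0 : (fun v : EuclideanSpace ℝ (Fin n) => ρ * ⟪v, x⟫ - ρ ^ 2 / 2 * ‖x‖ ^ 2)
      = fun v => ρ * (innerSL ℝ x v) - ρ ^ 2 / 2 * ‖x‖ ^ 2 := by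
    funext w; rw [innerSL_apply_apply, real_inner_comm]
  have h1 : HasFDerivAt (fun v : EuclideanSpace ℝ (Fin n) =>
      ρ * ⟪v, x⟫ - ρ ^ 2 / 2 * ‖x‖ ^ 2) (ρ • innerSL ℝ x) v := by
    rw [h0]
    exact (((innerSL ℝ x).hasFDerivAt.const_mul ρ).sub_const _)
  have h2 := (Real.hasDerivAt_exp (ρ * ⟪v, x⟫ - ρ ^ 2 / 2 * ‖x‖ ^ 2)).comp_hasFDerivAt v h1
  refine h2.congr_fderiv ?_
  rw [smul_smul, mul_comm]
  rfl


noncomputable def Phi (ρ : ℝ) (μX : Measure (EuclideanSpace ℝ (Fin n)))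
    (v : EuclideanSpace ℝ (Fin n)) : EuclideanSpace ℝ (Fin n) →L[ℝ] ℝ :=
  ∫ x, (ρ * ee ρ v x) • innerSL ℝ x ∂μX

lemma ee_nonneg (ρ : ℝ) (v x : EuclideanSpace ℝ (Fin n)) : 0 ≤ ee ρ v x :=
  le_of_lt (by unfold ee; exact Real.exp_pos _)

lemma continuous_G1 (ρ : ℝ) (v : EuclideanSpace ℝ (Fin n)) :
    Continuous (fun x : EuclideanSpace ℝ (Fin n) => (ρ * ee ρ v x) • innerSL ℝ x) :=
  (continuous_const.mul (continuous_ee ρ v)).smul (innerSL ℝ).continuous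

lemma integrable_G1 {ρ : ℝ} (hρ : 0 < ρ)
    {μX : Measure (EuclideanSpace ℝ (Fin n))}
    (hexp : ∀ (α : ℝ) (h : EuclideanSpace ℝ (Fin n)),
      Integrable (fun x => Real.exp (α * ⟪x, h⟫)) μX)
    (v : EuclideanSpace ℝ (Fin n)) :
    Integrable (fun x => (ρ * ee ρ v x) • innerSL ℝ x) μX := by
  refine Integrable.mono' ((integrable_pow_ee hρ hexp v 1).const_mul ρ) 
    (continuous_G1 ρ v).aestronglyMeasurable ?_
  filter_upwards with x
  rw [norm_smul (ρ * ee ρ v x) (innerSL ℝ x), innerSL_apply_norm, Real.norm_eq_abs,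
    abs_of_nonneg (mul_nonneg hρ.le (ee_nonneg ρ v x))]
  have : ρ * ee ρ v x * ‖x‖ = ρ * (‖x‖ ^ 1 * ee ρ v x) := by ring
  rw [this]

noncomputable instance instContinuousENormCLM2 :
    ContinuousENorm (EuclideanSpace ℝ (Fin n) →L[ℝ] EuclideanSpace ℝ (Fin n) →L[ℝ] ℝ) := by
  exact @SeminormedAddGroup.toContinuousENorm
    (EuclideanSpace ℝ (Fin n) →L[ℝ] EuclideanSpace ℝ (Fin n) →L[ℝ] ℝ) _

lemma continuous_G2 (ρ : ℝ) (v : EuclideanSpace ℝ (Fin n)) :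
    Continuous (fun x : EuclideanSpace ℝ (Fin n) =>
      ((ρ ^ 2 * ee ρ v x) • innerSL ℝ x).smulRight (innerSL ℝ x)) := by
  have hL := (ContinuousLinearMap.smulRightL ℝ (EuclideanSpace ℝ (Fin n))
    (EuclideanSpace ℝ (Fin n) →L[ℝ] ℝ)).continuous₂
  exact hL.comp (((continuous_const.mul (continuous_ee ρ v)).smul
    (innerSL ℝ).continuous).prodMk (innerSL ℝ).continuous)

lemma norm_G2 (ρ : ℝ) (hρ : 0 < ρ) (v x : EuclideanSpace ℝ (Fin n)) :
    ‖((ρ ^ 2 * ee ρ v x) • innerSL ℝ x).smulRight (innerSL ℝ x)‖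
      = ρ ^ 2 * (‖x‖ ^ 2 * ee ρ v x) := by
  rw [ContinuousLinearMap.norm_smulRight_apply,
    norm_smul (ρ ^ 2 * ee ρ v x) (innerSL ℝ x), innerSL_apply_norm,
    Real.norm_eq_abs, abs_of_nonneg (mul_nonneg (by positivity) (ee_nonneg ρ v x))]
  ring

lemma integrable_G2 {ρ : ℝ} (hρ : 0 < ρ)
    {μX : Measure (EuclideanSpace ℝ (Fin n))}
    (hexp : ∀ (α : ℝ) (h : EuclideanSpace ℝ (Fin n)),
      Integrable (fun x => Real.exp (α * ⟪x, h⟫)) μX)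
    (v : EuclideanSpace ℝ (Fin n)) :
    Integrable (fun x => ((ρ ^ 2 * ee ρ v x) • innerSL ℝ x).smulRight (innerSL ℝ x)) μX := by
  refine Integrable.mono' (β := EuclideanSpace ℝ (Fin n) →L[ℝ] EuclideanSpace ℝ (Fin n) →L[ℝ] ℝ)
    ((integrable_pow_ee hρ hexp v 2).const_mul (ρ ^ 2))
    (continuous_G2 ρ v).aestronglyMeasurable ?_
  filter_upwards with x
  rw [norm_G2 ρ hρ v x]

lemma hasFDerivAt_G1 (ρ : ℝ) (x v : EuclideanSpace ℝ (Fin n)) :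
    HasFDerivAt (fun v => (ρ * ee ρ v x) • innerSL ℝ x)
      (((ρ ^ 2 * ee ρ v x) • innerSL ℝ x).smulRight (innerSL ℝ x)) v := by
  have h2 := ((hasFDerivAt_ee ρ x v).const_mul ρ).smul_const (innerSL ℝ x)
  refine h2.congr_fderiv ?_
  ext k m
  simp only [ContinuousLinearMap.smulRight_apply, ContinuousLinearMap.smul_apply,
    innerSL_apply_apply, smul_eq_mul]
  ring

lemma hasFDerivAt_intee {ρ : ℝ} (hρ : 0 < ρ)
    {μX : Measure (EuclideanSpace ℝ (Fin n))}
    (hexp : ∀ (α : ℝ) (h : EuclideanSpace ℝ (Fin n)),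
      Integrable (fun x => Real.exp (α * ⟪x, h⟫)) μX)
    (u : EuclideanSpace ℝ (Fin n)) :
    HasFDerivAt (fun v => ∫ x, ee ρ v x ∂μX) (Phi ρ μX u) u := by
  unfold Phi
  refine hasFDerivAt_integral_of_dominated_of_fderiv_le (𝕜 := ℝ) (s := Metric.ball u 1)
    (F' := fun v x => (ρ * ee ρ v x) • innerSL ℝ x)
    (bound := fun a => ρ * ((1:ℕ).factorial / ρ ^ 1 * Real.exp 2 * Real.exp (ρ * ⟪a, u⟫)))
    (Metric.ball_mem_nhds u one_pos) ?_ ?_ ?_ ?_ ?_ ?_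
  · exact Filter.Eventually.of_forall fun v => (continuous_ee ρ v).aestronglyMeasurable
  · simpa using integrable_pow_ee hρ hexp u 0
  · exact (continuous_G1 ρ u).aestronglyMeasurable
  · filter_upwards with a
    intro v hv
    rw [norm_smul (ρ * ee ρ v a) (innerSL ℝ a), innerSL_apply_norm, Real.norm_eq_abs,
      abs_of_nonneg (mul_nonneg hρ.le (ee_nonneg ρ v a))]
    have h1 : ρ * ee ρ v a * ‖a‖ = ρ * (‖a‖ ^ 1 * ee ρ v a) := by ring
    rw [h1]
    exact mul_le_mul_of_nonneg_left (ee_bound hρ u 1 a hv) hρ.le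
  · exact ((hexp ρ u).const_mul _).const_mul ρ
  · filter_upwards with a
    intro v hv
    exact hasFDerivAt_ee ρ a v

lemma hasFDerivAt_Phi {ρ : ℝ} (hρ : 0 < ρ)
    {μX : Measure (EuclideanSpace ℝ (Fin n))}
    (hexp : ∀ (α : ℝ) (h : EuclideanSpace ℝ (Fin n)),
      Integrable (fun x => Real.exp (α * ⟪x, h⟫)) μX)
    (u : EuclideanSpace ℝ (Fin n)) :
    HasFDerivAt (Phi ρ μX)
      (∫ x, ((ρ ^ 2 * ee ρ u x) • innerSL ℝ x).smulRight (innerSL ℝ x) ∂μX) u := by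
  unfold Phi
  refine hasFDerivAt_integral_of_dominated_of_fderiv_le (𝕜 := ℝ) (s := Metric.ball u 1)
    (F' := fun v x => ((ρ ^ 2 * ee ρ v x) • innerSL ℝ x).smulRight (innerSL ℝ x))
    (bound := fun a => ρ ^ 2 * ((2:ℕ).factorial / ρ ^ 2 * Real.exp 2 * Real.exp (ρ * ⟪a, u⟫)))
    (Metric.ball_mem_nhds u one_pos) ?_ ?_ ?_ ?_ ?_ ?_
  · exact Filter.Eventually.of_forall fun v => (continuous_G1 ρ v).aestronglyMeasurable
  · exact integrable_G1 hρ hexp u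
  · exact (continuous_G2 ρ u).aestronglyMeasurable
  · filter_upwards with a
    intro v hv
    rw [norm_G2 ρ hρ v a]
    exact mul_le_mul_of_nonneg_left (ee_bound hρ u 2 a hv) (by positivity)
  · exact ((hexp ρ u).const_mul _).const_mul (ρ ^ 2)
  · filter_upwards with a
    intro v hv
    exact hasFDerivAt_G1 ρ a v


lemma Phi_apply {ρ : ℝ} (hρ : 0 < ρ)
    {μX : Measure (EuclideanSpace ℝ (Fin n))}
    (hexp : ∀ (α : ℝ) (h : EuclideanSpace ℝ (Fin n)),
      Integrable (fun x => Real.exp (α * ⟪x, h⟫)) μX)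
    (v h : EuclideanSpace ℝ (Fin n)) :
    Phi ρ μX v h = ρ * ∫ x, ee ρ v x * ⟪x, h⟫ ∂μX := by
  unfold Phi
  rw [ContinuousLinearMap.integral_apply (integrable_G1 hρ hexp v) h]
  simp only [ContinuousLinearMap.smul_apply, innerSL_apply_apply, smul_eq_mul]
  rw [← integral_const_mul]
  congr 1; funext x; ring

lemma Psi_apply {ρ : ℝ} (hρ : 0 < ρ)
    {μX : Measure (EuclideanSpace ℝ (Fin n))}
    (hexp : ∀ (α : ℝ) (h : EuclideanSpace ℝ (Fin n)),
      Integrable (fun x => Real.exp (α * ⟪x, h⟫)) μX)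
    (u h : EuclideanSpace ℝ (Fin n)) :
    (∫ x, ((ρ ^ 2 * ee ρ u x) • innerSL ℝ x).smulRight (innerSL ℝ x) ∂μX) h h
      = ρ ^ 2 * ∫ x, ee ρ u x * ⟪x, h⟫ ^ 2 ∂μX := by
  rw [ContinuousLinearMap.integral_apply (integrable_G2 hρ hexp u) h,
    ContinuousLinearMap.integral_apply ((integrable_G2 hρ hexp u).apply_continuousLinearMap h) h]
  simp only [ContinuousLinearMap.smulRight_apply, ContinuousLinearMap.smul_apply,
    innerSL_apply_apply, smul_eq_mul]
  rw [← integral_const_mul]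
  congr 1; funext x; ring

end SecondDerivAux

open SecondDerivAux in
/-- ∇²_{h,h} log ℓ(u) = ρ² (E[⟨x,h⟩²|y=u] − (E[⟨x,h⟩|y=u])²). -/
theorem second_deriv_log_likelihood_eq_posterior_variance (n : ℕ) (ρ : ℝ) (hρ : 0 < ρ)
    (μX : Measure (EuclideanSpace ℝ (Fin n))) [IsProbabilityMeasure μX]
    (hexp : ∀ (α : ℝ) (h : EuclideanSpace ℝ (Fin n)),
      Integrable (fun x => Real.exp (α * ⟪x, h⟫)) μX)
    (hpos : ∀ u, 0 < lik n ρ μX u)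
    (h u : EuclideanSpace ℝ (Fin n)) :
    iteratedFDeriv ℝ 2 (fun v => Real.log (lik n ρ μX v)) u (fun _ => h)
      = ρ ^ 2 * (postExp n ρ μX (fun x => ⟪x, h⟫ ^ 2) u
          - (postExp n ρ μX (fun x => ⟪x, h⟫) u) ^ 2) := by
  have hlik : ∀ v, HasFDerivAt (lik n ρ μX) (Phi ρ μX v) v := fun v =>
    hasFDerivAt_intee hρ hexp v
  have hlog : ∀ v, HasFDerivAt (fun w => Real.log (lik n ρ μX w))
      ((lik n ρ μX v)⁻¹ • Phi ρ μX v) v := fun v =>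
    (Real.hasDerivAt_log (hpos v).ne').comp_hasFDerivAt v (hlik v)
  have hfd : (fderiv ℝ fun w => Real.log (lik n ρ μX w))
      = fun v => (lik n ρ μX v)⁻¹ • Phi ρ μX v :=
    funext fun v => (hlog v).fderiv
  have hinv : HasFDerivAt (fun v => (lik n ρ μX v)⁻¹)
      ((-(lik n ρ μX u ^ 2)⁻¹) • Phi ρ μX u) u :=
    (hasDerivAt_inv (hpos u).ne').comp_hasFDerivAt u (hlik u)
  have hPhi := hasFDerivAt_Phi hρ hexp u
  have hc : HasFDerivAt (fun v => (lik n ρ μX v)⁻¹ • Phi ρ μX v)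
      ((lik n ρ μX u)⁻¹ •
          (∫ x, ((ρ ^ 2 * ee ρ u x) • innerSL ℝ x).smulRight (innerSL ℝ x) ∂μX)
        + ((-(lik n ρ μX u ^ 2)⁻¹) • Phi ρ μX u).smulRight (Phi ρ μX u)) u :=
    hinv.smul hPhi
  rw [iteratedFDeriv_two_apply, hfd, hc.fderiv]
  simp only [ContinuousLinearMap.add_apply, ContinuousLinearMap.smul_apply,
    ContinuousLinearMap.smulRight_apply, smul_eq_mul]
  rw [Psi_apply hρ hexp u h, Phi_apply hρ hexp u h]
  unfold postExp
  have hl : lik n ρ μX u = ∫ x, ee ρ u x ∂μX := rfl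
  have h2 : (∫ x, Real.exp (ρ * ⟪u, x⟫ - ρ ^ 2 / 2 * ‖x‖ ^ 2) * ⟪x, h⟫ ^ 2 ∂μX)
      = ∫ x, ee ρ u x * ⟪x, h⟫ ^ 2 ∂μX := rfl
  have h1 : (∫ x, Real.exp (ρ * ⟪u, x⟫ - ρ ^ 2 / 2 * ‖x‖ ^ 2) * ⟪x, h⟫ ∂μX)
      = ∫ x, ee ρ u x * ⟪x, h⟫ ∂μX := rfl
  rw [h2, h1]
  have hne : lik n ρ μX u ≠ 0 := (hpos u).ne'
  field_simp
  ring
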